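/- Bias of the Kiefer–Wolfowitz gradient estimate: if F : ℝ^d → ℝ is differentiable with L-Lipschitz gradient and c > 0, then for every x ∈ ℝ^d, ‖g_c(F)(x) − ∇F(x)‖ ≤ (cL/2)·√d. -/

import Mathlib

open scoped RealInnerProductSpace BigOperators

lemma kwsa_key_aux {d : ℕ} (F : EuclideanSpace ℝ (Fin d) → ℝ) (hF : Differentiable ℝ F)
    (L : ℝ) (hL : 0 < L)
    (hFlip : ∀ u w, ‖gradient F u - gradient F w‖ ≤ L * ‖u - w‖)
    (c : ℝ) (hc : 0 < c) (u v : EuclideanSpace ℝ (Fin d)) (hv : ‖v‖ ≤ 1) :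
    |F (u + c • v) - F u - c * ⟪gradient F u, v⟫| ≤ L * c ^ 2 / 2 := by
  have hderiv : ∀ t : ℝ, HasDerivAt (fun s : ℝ => F (u + s • v))
      ⟪gradient F (u + t • v), v⟫ t := by
    intro t
    have h1 : HasDerivAt (fun s : ℝ => u + s • v) v t := by
      simpa using ((hasDerivAt_id t).smul_const v).const_add u
    have h2 := (hF (u + t • v)).hasGradientAt
    have h3 : HasFDerivAt F (InnerProductSpace.toDual ℝ _ (gradient F (u + t • v)))
        (u + t • v) := by rwa [hasGradientAt_iff_hasFDerivAt] at h2
    simpa [InnerProductSpace.toDual_apply_apply, Function.comp_def] using h3.comp_hasDerivAt t h1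
  have hlip : LipschitzWith L.toNNReal (gradient F) := by
    apply LipschitzWith.of_dist_le_mul
    intro a b
    simpa [dist_eq_norm, Real.coe_toNNReal L hL.le] using hFlip a b
  have hcont : Continuous fun t : ℝ => ⟪gradient F (u + t • v), v⟫ := by
    apply Continuous.inner
    · exact hlip.continuous.comp (by continuity)
    · exact continuous_const
  have hint : IntervalIntegrable (fun t : ℝ => ⟪gradient F (u + t • v), v⟫)
      MeasureTheory.volume 0 c := hcont.intervalIntegrable 0 c
  have hFTC : F (u + c • v) - F u =
      ∫ t in (0:ℝ)..c, ⟪gradient F (u + t • v), v⟫ := by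
    have := intervalIntegral.integral_eq_sub_of_hasDerivAt
      (f := fun s : ℝ => F (u + s • v)) (fun t _ => hderiv t) hint
    simp only [zero_smul, add_zero] at this
    exact this.symm
  have hconst : c * ⟪gradient F u, v⟫ = ∫ t in (0:ℝ)..c, ⟪gradient F u, v⟫ := by
    simp [mul_comm]
  rw [hFTC, hconst, ← intervalIntegral.integral_sub hint intervalIntegrable_const]
  have hbound : ∀ t ∈ Set.Icc (0:ℝ) c,
      |⟪gradient F (u + t • v), v⟫ - ⟪gradient F u, v⟫| ≤ L * t := by
    intro t ht
    rw [← inner_sub_left]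
    calc |⟪gradient F (u + t • v) - gradient F u, v⟫|
        ≤ ‖gradient F (u + t • v) - gradient F u‖ * ‖v‖ := abs_real_inner_le_norm _ _
      _ ≤ (L * ‖(u + t • v) - u‖) * 1 :=
          mul_le_mul (hFlip _ _) hv (norm_nonneg _) (by positivity)
      _ ≤ L * t := by
          rw [add_sub_cancel_left, norm_smul, Real.norm_eq_abs, abs_of_nonneg ht.1]
          nlinarith [mul_nonneg hL.le ht.1, norm_nonneg v]
  calc |∫ t in (0:ℝ)..c, (⟪gradient F (u + t • v), v⟫ - ⟪gradient F u, v⟫)|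
      ≤ ∫ t in (0:ℝ)..c, L * t := by
        apply intervalIntegral.abs_integral_le_integral_abs hc.le |>.trans
        apply intervalIntegral.integral_mono_on hc.le
        · exact (hint.sub intervalIntegrable_const).abs
        · exact (continuous_const.mul continuous_id).intervalIntegrable 0 c
        · exact hbound
    _ = L * c ^ 2 / 2 := by
        rw [intervalIntegral.integral_const_mul, integral_id]
        ring

lemma euclidean_sum_apply {d : ℕ} (s : Finset (Fin d))
    (f : Fin d → EuclideanSpace ℝ (Fin d)) (i : Fin d) :
    (∑ j ∈ s, f j) i = ∑ j ∈ s, f j i := by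
  induction s using Finset.induction with
  | empty => simp
  | insert _ _ h ih => rw [Finset.sum_insert h, Finset.sum_insert h, ← ih]; rfl

/-- The KWSA (Kiefer–Wolfowitz) gradient estimate of `F` at `x` with smoothing
parameter `c`: `g_c(F)(x) = ∑ i, ((F(x + c·e_i) − F(x))/c)·e_i`. -/
noncomputable def kwsa (d : ℕ) (F : EuclideanSpace ℝ (Fin d) → ℝ) (c : ℝ)
    (x : EuclideanSpace ℝ (Fin d)) : EuclideanSpace ℝ (Fin d) :=
  ∑ i : Fin d, ((F (x + c • EuclideanSpace.single i (1 : ℝ)) - F x) / c) •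
    EuclideanSpace.single i (1 : ℝ)

theorem kwsa_bias
    (d : ℕ) (hd : 1 ≤ d)
    (F : EuclideanSpace ℝ (Fin d) → ℝ)
    (hFdiff : Differentiable ℝ F)
    (L : ℝ) (hL : 0 < L)
    (hFlip : ∀ u w, ‖gradient F u - gradient F w‖ ≤ L * ‖u - w‖)
    (c : ℝ) (hc : 0 < c)
    (x : EuclideanSpace ℝ (Fin d)) :
    ‖kwsa d F c x - gradient F x‖ ≤ (c * L / 2) * Real.sqrt d := by
  set w := kwsa d F c x - gradient F x with hw
  have hb : (0:ℝ) ≤ c * L / 2 := by positivity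
  have hcoord : ∀ i : Fin d, |w i| ≤ c * L / 2 := by
    intro i
    have hv : ‖EuclideanSpace.single i (1:ℝ)‖ ≤ 1 := by
      rw [EuclideanSpace.norm_single]; simp
    have hkey := kwsa_key_aux F hFdiff L hL hFlip c hc x
      (EuclideanSpace.single i (1:ℝ)) hv
    have hinner : ⟪gradient F x, EuclideanSpace.single i (1:ℝ)⟫ = gradient F x i := by
      rw [EuclideanSpace.inner_single_right]; simp
    have hwi : w i = (F (x + c • EuclideanSpace.single i (1:ℝ)) - F x) / c
        - gradient F x i := by
      have : kwsa d F c x i =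
          (F (x + c • EuclideanSpace.single i (1:ℝ)) - F x) / c := by
        rw [kwsa, euclidean_sum_apply]
        simp [PiLp.smul_apply, EuclideanSpace.single_apply]
      simp [hw, this]
    rw [hinner] at hkey
    have heq : w i = (F (x + c • EuclideanSpace.single i (1:ℝ)) - F x
        - c * gradient F x i) / c := by
      rw [hwi]; field_simp
    rw [heq, abs_div, abs_of_pos hc, div_le_iff₀ hc]
    nlinarith [hkey]
  have hnorm : ‖w‖ ≤ Real.sqrt (d * (c * L / 2) ^ 2) := by
    rw [EuclideanSpace.norm_eq]
    apply Real.sqrt_le_sqrt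
    calc ∑ i, ‖w i‖ ^ 2 ≤ ∑ _i : Fin d, (c * L / 2) ^ 2 := by
          apply Finset.sum_le_sum
          intro i _
          have := hcoord i
          rw [Real.norm_eq_abs]
          nlinarith [abs_nonneg (w i)]
      _ = d * (c * L / 2) ^ 2 := by simp [mul_comm]
  calc ‖w‖ ≤ Real.sqrt (d * (c * L / 2) ^ 2) := hnorm
    _ = (c * L / 2) * Real.sqrt d := by
        rw [Real.sqrt_mul (by positivity), Real.sqrt_sq hb, mul_comm]
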